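/- Let T be an x-monotone polygonal chain and let e = vv' be an edge of T with x(v) < x(v'). If a point u above T with x(u) ≥ x(v') sees both endpoints v and v' of e, then u sees every point of e (e is fully visible from u). -/
import Mathlib


open Set

/-- Visibility: the segment from terrain point `p` to guard `u` stays on or above
the terrain, which is the graph of `f` over `[a,b]`. -/
def Vis (a b : ℝ) (f : ℝ → ℝ) (p u : ℝ × ℝ) : Prop :=
  ∀ q ∈ segment ℝ p u, q.1 ∈ Set.Icc a b → f q.1 ≤ q.2

/-- If a point `u` above `T` with `x(u) ≥ x(v')` sees both endpoints of an edge
`e = vv'` of `T` (with `x(v) < x(v')`), then `u` sees every point of `e`. -/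
theorem stmt3 (a b : ℝ) (f : ℝ → ℝ) (s t m c : ℝ)
    (hst : s < t) (hs : s ∈ Set.Icc a b) (ht : t ∈ Set.Icc a b)
    (haff : ∀ r ∈ Set.Icc s t, f r = m * r + c)
    (u : ℝ × ℝ) (hu : u.1 ∈ Set.Icc a b → f u.1 ≤ u.2) (hur : t ≤ u.1)
    (hv : Vis a b f (s, f s) u) (hv' : Vis a b f (t, f t) u) :
    ∀ r ∈ Set.Icc s t, Vis a b f (r, f r) u := by
  have hfs := haff s ⟨le_rfl, hst.le⟩
  have hft := haff t ⟨hst.le, le_rfl⟩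
  -- u lies on or above the line of the edge
  have huline : m * u.1 + c ≤ u.2 := by
    rcases eq_or_lt_of_le hur with h | h
    · have h1 : u.1 ∈ Set.Icc a b := h ▸ ht
      have h2 := hu h1
      rw [show u.1 = t from h.symm, hft] at h2
      rw [show u.1 = t from h.symm]; exact h2
    · set θ : ℝ := (t - s) / (u.1 - s) with hθdef
      have hus : s < u.1 := lt_trans hst h
      have hθ0 : 0 < θ := div_pos (by linarith) (by linarith)
      have hθ1 : θ < 1 := (div_lt_one (by linarith)).2 (by linarith)
      have hxθ : (1 - θ) * s + θ * u.1 = t := by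
        have hc : θ * (u.1 - s) = t - s :=
          div_mul_cancel₀ _ (show u.1 - s ≠ 0 by linarith)
        linarith [hc]
      have hmem : ((1 - θ) • ((s : ℝ), f s) + θ • u) ∈ segment ℝ ((s : ℝ), f s) u :=
        ⟨1 - θ, θ, by linarith, hθ0.le, by ring, rfl⟩
      have hx : ((1 - θ) • ((s : ℝ), f s) + θ • u).1 = t := by
        simp only [Prod.fst_add, Prod.smul_fst, smul_eq_mul]
        exact hxθ
      have hle := hv _ hmem (by rw [hx]; exact ht)
      rw [hx] at hle
      have hy : ((1 - θ) • ((s : ℝ), f s) + θ • u).2 = (1 - θ) * f s + θ * u.2 := by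
        simp only [Prod.snd_add, Prod.smul_snd, smul_eq_mul]
      rw [hy, hfs, hft] at hle
      by_contra hcon
      push_neg at hcon
      have h3 : θ * u.2 < θ * (m * u.1 + c) := by
        exact mul_lt_mul_of_pos_left hcon hθ0
      have hm : m * t = (1 - θ) * (m * s) + θ * (m * u.1) := by
        rw [← hxθ]; ring
      linarith [hle, h3, hm]
  intro r hr q hq hqx
  obtain ⟨α, β, hα, hβ, hαβ, hqe⟩ := hq
  have h1 := congrArg Prod.fst hqe
  have h2 := congrArg Prod.snd hqe
  simp only [Prod.fst_add, Prod.snd_add, Prod.smul_fst, Prod.smul_snd, smul_eq_mul] at h1 h2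
  have hfr := haff r hr
  have hru : r ≤ u.1 := le_trans hr.2 hur
  have hsu : s ≤ u.1 := le_trans hst.le hur
  have hαe : (1 : ℝ) - β = α := by linarith
  have hsc : α * s + β * s = s := by rw [← add_mul, hαβ, one_mul]
  have hcc : α * c + β * c = c := by rw [← add_mul, hαβ, one_mul]
  have huu : α * u.1 + β * u.1 = u.1 := by rw [← add_mul, hαβ, one_mul]
  by_cases hcase : q.1 ≤ t
  · have hq1s : s ≤ q.1 := by
      linarith [mul_nonneg hα (sub_nonneg.2 hr.1), mul_nonneg hβ (sub_nonneg.2 hsu), h1, hsc]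
    have hfq := haff q.1 ⟨hq1s, hcase⟩
    rw [hfq, ← h1, ← h2, hfr]
    linarith [mul_le_mul_of_nonneg_left huline hβ, hcc]
  · push_neg at hcase
    have hq1u : q.1 ≤ u.1 := by
      linarith [mul_nonneg hα (sub_nonneg.2 hru), h1, huu]
    have htu : t < u.1 := lt_of_lt_of_le hcase hq1u
    set μ : ℝ := (q.1 - t) / (u.1 - t) with hμdef
    have hμ0 : 0 < μ := div_pos (by linarith) (by linarith)
    have hμ1 : μ ≤ 1 := (div_le_one (by linarith)).2 (by linarith)
    have hxμ : (1 - μ) * t + μ * u.1 = q.1 := by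
      have hc : μ * (u.1 - t) = q.1 - t :=
        div_mul_cancel₀ _ (show u.1 - t ≠ 0 by linarith)
      linarith [hc]
    have hmem : ((1 - μ) • ((t : ℝ), f t) + μ • u) ∈ segment ℝ ((t : ℝ), f t) u :=
      ⟨1 - μ, μ, by linarith, hμ0.le, by ring, rfl⟩
    have hx : ((1 - μ) • ((t : ℝ), f t) + μ • u).1 = q.1 := by
      simp only [Prod.fst_add, Prod.smul_fst, smul_eq_mul]
      exact hxμ
    have hle := hv' _ hmem (by rw [hx]; exact hqx)
    rw [hx] at hle
    have hy : ((1 - μ) • ((t : ℝ), f t) + μ • u).2 = (1 - μ) * f t + μ * u.2 := by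
      simp only [Prod.snd_add, Prod.smul_snd, smul_eq_mul]
    rw [hy] at hle
    have h1' : (1 - β) * r + β * u.1 = q.1 := by rw [hαe]; exact h1
    -- β ≥ μ
    have hβμ : μ ≤ β := by
      by_contra hc
      push_neg at hc
      have hp := mul_pos (sub_pos.2 hc) (show (0:ℝ) < u.1 - r by linarith [hr.2, htu])
      have h4 := mul_nonneg (sub_nonneg.2 hμ1) (sub_nonneg.2 hr.2)
      linarith [h1', hxμ, hp, h4]
    calc f q.1 ≤ (1 - μ) * f t + μ * u.2 := hle
      _ ≤ q.2 := by
          rw [← h2, hfr, hft]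
          have hm1 : m * ((1 - β) * r + β * u.1) = m * ((1 - μ) * t + μ * u.1) := by
            rw [h1', hxμ]
          have hαc : α * c = c - β * c := by rw [← hαe]; ring
          have hαmr : α * (m * r) = m * r - β * (m * r) := by rw [← hαe]; ring
          linarith [mul_nonneg (sub_nonneg.2 hβμ) (sub_nonneg.2 huline), hm1, hαc, hαmr]
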